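/- Let $f:\mathbb{R}^p\to\mathbb{R}$ be convex with minimizer $x_*$ and minimum $f_*$. Let $x_0\in\mathbb{R}^p$, $\lambda_k>0$, $g_k\in\partial f(x_k)$, $s_0=0$, $s_{k+1}=s_k+\lambda_k g_k$, and let $A_k$ be positive definite diagonal matrices with $A_{k+1}\succeq A_k$, with iterates $x_k = x_0 - A_k^{-1}s_k$. Then $\sum_{k=0}^{n}\lambda_k(f(x_k)-f_*) \leq \|s_{n+1}\|_1\|x_0-x_*\|_\infty - \frac{1}{2}\|s_{n+1}\|_{A_{n+1}^{-1}}^2 + \frac{1}{2}\sum_{k=0}^{n}\lambda_k^2\|g_k\|_{A_k^{-1}}^2$. -/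
import Mathlib


open Finset Matrix

theorem stmt10 (p n : ℕ) (f : (Fin p → ℝ) → ℝ)
    (hconv : ConvexOn ℝ Set.univ f)
    (xstar x0 : Fin p → ℝ)
    (hmin : ∀ y, f xstar ≤ f y)
    (g s x : ℕ → Fin p → ℝ) (lam : ℕ → ℝ)
    (hlam : ∀ k, 0 < lam k)
    (a : ℕ → Fin p → ℝ)
    (ha : ∀ k i, 0 < a k i)
    (hamono : ∀ k i, a k i ≤ a (k + 1) i)
    (A : ℕ → Matrix (Fin p) (Fin p) ℝ)
    (hAdiag : ∀ k, A k = Matrix.diagonal (a k))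
    (hs0 : s 0 = 0) (hs : ∀ k, s (k + 1) = s k + lam k • g k)
    (hx : ∀ k, x k = x0 - (A k)⁻¹ *ᵥ s k)
    (hsubgrad : ∀ k, ∀ y, f (x k) + g k ⬝ᵥ (y - x k) ≤ f y) :
    ∑ k ∈ range (n + 1), lam k * (f (x k) - f xstar)
      ≤ (∑ i, |s (n + 1) i|) * ‖x0 - xstar‖
        - (1 / 2) * (s (n + 1) ⬝ᵥ ((A (n + 1))⁻¹ *ᵥ s (n + 1)))
        + (1 / 2) * ∑ k ∈ range (n + 1), (lam k) ^ 2 * (g k ⬝ᵥ ((A k)⁻¹ *ᵥ g k)) := by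
  have hAinvmat : ∀ k, (A k)⁻¹ = Matrix.diagonal (fun i => (a k i)⁻¹) := by
    intro k
    rw [hAdiag]
    apply Matrix.inv_eq_left_inv
    rw [Matrix.diagonal_mul_diagonal]
    rw [show (fun i => (a k i)⁻¹ * a k i) = (1 : Fin p → ℝ) from
      funext fun i => inv_mul_cancel₀ (ha k i).ne']
    exact Matrix.diagonal_one
  have hainv : ∀ k (v : Fin p → ℝ), (A k)⁻¹ *ᵥ v = fun i => (a k i)⁻¹ * v i := by
    intro k v
    rw [hAinvmat]
    ext i
    simp [Matrix.mulVec_diagonal]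
  have hdot : ∀ k (u v : Fin p → ℝ), u ⬝ᵥ ((A k)⁻¹ *ᵥ v) = ∑ i, u i * ((a k i)⁻¹ * v i) := by
    intro k u v
    rw [hainv]
    rfl
  set Q : ℕ → (Fin p → ℝ) → ℝ := fun k v => ∑ i, (a k i)⁻¹ * (v i) ^ 2 with hQdef
  have hQ : ∀ k v, v ⬝ᵥ ((A k)⁻¹ *ᵥ v) = Q k v := by
    intro k v
    rw [hdot]
    exact Finset.sum_congr rfl (fun i _ => by ring)
  have hQmono : ∀ k v, Q (k + 1) v ≤ Q k v := by
    intro k v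
    apply Finset.sum_le_sum
    intro i _
    have h1 : (a (k + 1) i)⁻¹ ≤ (a k i)⁻¹ :=
      inv_anti₀ (ha k i) (hamono k i)
    nlinarith [sq_nonneg (v i)]
  -- key per-step inequality
  have hkey : ∀ k, lam k * (f (x k) - f xstar) ≤
      lam k * (g k ⬝ᵥ (x0 - xstar)) + (1 / 2) * (Q k (s k) - Q k (s (k + 1)))
        + (1 / 2) * (lam k ^ 2 * Q k (g k)) := by
    intro k
    have hsg := hsubgrad k xstar
    have hneg : g k ⬝ᵥ (xstar - x k) = -(g k ⬝ᵥ (x k - xstar)) := by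
      rw [← dotProduct_neg, neg_sub]
    have h1 : f (x k) - f xstar ≤ g k ⬝ᵥ (x k - xstar) := by linarith [hsg, hneg.le, hneg.ge]
    have h2 : g k ⬝ᵥ (x k - xstar) = g k ⬝ᵥ (x0 - xstar) - g k ⬝ᵥ ((A k)⁻¹ *ᵥ s k) := by
      rw [hx k, sub_right_comm, dotProduct_sub]
    have h3 : 2 * (lam k * (g k ⬝ᵥ ((A k)⁻¹ *ᵥ s k))) + Q k (s k) + lam k ^ 2 * Q k (g k)
        = Q k (s (k + 1)) := by
      rw [hs k]
      simp only [hQdef, hdot, Pi.add_apply, Pi.smul_apply, smul_eq_mul]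
      rw [Finset.mul_sum, Finset.mul_sum, Finset.mul_sum, ← Finset.sum_add_distrib,
        ← Finset.sum_add_distrib]
      exact Finset.sum_congr rfl fun i _ => by ring
    have hl : (0 : ℝ) ≤ lam k := (hlam k).le
    have h4 : lam k * (f (x k) - f xstar) ≤ lam k * (g k ⬝ᵥ (x k - xstar)) :=
      mul_le_mul_of_nonneg_left h1 hl
    have h5 : lam k * (g k ⬝ᵥ (x k - xstar))
        = lam k * (g k ⬝ᵥ (x0 - xstar)) - lam k * (g k ⬝ᵥ ((A k)⁻¹ *ᵥ s k)) := by
      rw [h2]; ring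
    linarith [h4, h5, h3]
  have hsum1 : ∑ k ∈ range (n + 1), lam k * (f (x k) - f xstar)
      ≤ ∑ k ∈ range (n + 1), (lam k * (g k ⬝ᵥ (x0 - xstar))
          + (1 / 2) * (Q k (s k) - Q k (s (k + 1))) + (1 / 2) * (lam k ^ 2 * Q k (g k))) :=
    Finset.sum_le_sum fun k _ => hkey k
  rw [Finset.sum_add_distrib, Finset.sum_add_distrib] at hsum1
  -- the first sum is s (n+1) ⬝ᵥ (x0 - xstar)
  have hsform : ∀ m, s m = ∑ k ∈ range m, lam k • g k := by
    intro m
    induction m with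
    | zero => simpa using hs0
    | succ m ih => rw [hs m, ih, Finset.sum_range_succ]
  have hA1 : ∑ k ∈ range (n + 1), lam k * (g k ⬝ᵥ (x0 - xstar))
      = s (n + 1) ⬝ᵥ (x0 - xstar) := by
    rw [hsform (n + 1)]
    simp only [dotProduct, Finset.sum_apply, Pi.smul_apply, smul_eq_mul,
      Finset.sum_mul, Finset.mul_sum]
    rw [Finset.sum_comm]
    exact Finset.sum_congr rfl fun k _ => Finset.sum_congr rfl fun i _ => by ring
  have hS1 : s (n + 1) ⬝ᵥ (x0 - xstar) ≤ (∑ i, |s (n + 1) i|) * ‖x0 - xstar‖ := by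
    rw [Finset.sum_mul]
    have : s (n + 1) ⬝ᵥ (x0 - xstar) = ∑ i, s (n + 1) i * (x0 - xstar) i := rfl
    rw [this]
    apply Finset.sum_le_sum
    intro i _
    calc s (n + 1) i * (x0 - xstar) i ≤ |s (n + 1) i * (x0 - xstar) i| := le_abs_self _
      _ = |s (n + 1) i| * |(x0 - xstar) i| := abs_mul _ _
      _ ≤ |s (n + 1) i| * ‖x0 - xstar‖ := by
          apply mul_le_mul_of_nonneg_left _ (abs_nonneg _)
          simpa [Real.norm_eq_abs] using norm_le_pi_norm (x0 - xstar) i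
  -- telescoping
  have hS2 : ∑ k ∈ range (n + 1), (Q k (s k) - Q k (s (k + 1))) ≤ - Q (n + 1) (s (n + 1)) := by
    have htel : ∑ k ∈ range (n + 1), ((fun k => Q k (s k)) k - (fun k => Q k (s k)) (k + 1))
        = Q 0 (s 0) - Q (n + 1) (s (n + 1)) :=
      Finset.sum_range_sub' (fun k => Q k (s k)) (n + 1)
    have h0 : Q 0 (s 0) = 0 := by simp [hQdef, hs0]
    calc ∑ k ∈ range (n + 1), (Q k (s k) - Q k (s (k + 1)))
        ≤ ∑ k ∈ range (n + 1), (Q k (s k) - Q (k + 1) (s (k + 1))) := by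
          apply Finset.sum_le_sum
          intro k _
          linarith [hQmono k (s (k + 1))]
      _ = - Q (n + 1) (s (n + 1)) := by
          simpa [h0] using htel
  have hhalf : ∑ k ∈ range (n + 1), (1 / 2 : ℝ) * (Q k (s k) - Q k (s (k + 1)))
      = (1 / 2) * ∑ k ∈ range (n + 1), (Q k (s k) - Q k (s (k + 1))) := by
    rw [Finset.mul_sum]
  have hC : ∑ k ∈ range (n + 1), (1 / 2 : ℝ) * (lam k ^ 2 * Q k (g k))
      = (1 / 2) * ∑ k ∈ range (n + 1), lam k ^ 2 * (g k ⬝ᵥ ((A k)⁻¹ *ᵥ g k)) := by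
    rw [Finset.mul_sum]
    exact Finset.sum_congr rfl fun k _ => by rw [hQ k (g k)]
  rw [hQ (n + 1) (s (n + 1))]
  rw [hA1, hhalf, hC] at hsum1
  have := mul_le_mul_of_nonneg_left hS2 (by norm_num : (0:ℝ) ≤ 1 / 2)
  linarith [hsum1, hS1, this]
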